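/- For every r ≥ 0 and every n ≥ 0, the coefficient [z^n]B_r(z) equals the number of binary trees with n internal nodes whose register function value is at most r. -/

import Mathlib

/-- A binary tree is either a leaf `□` or an internal node with two subtrees. -/
inductive BTree : Type
  | leaf : BTree
  | node : BTree → BTree → BTree
deriving DecidableEq

namespace BTree

/-- The size of a binary tree: its number of internal nodes. -/
def size : BTree → ℕ
  | leaf => 0
  | node t₁ t₂ => t₁.size + t₂.size + 1

/-- The register function (Horton–Strahler number) of a binary tree. -/
def reg : BTree → ℕ
  | leaf => 0
  | node t₁ t₂ => if t₁.reg = t₂.reg then t₁.reg + 1 else max t₁.reg t₂.reg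

end BTree

/-- The functions `B_r`, defined by `B_0(z) = 1` and
`B_r(z) = 1 + (z/(1-2z)) · B_{r-1}(z²/(1-2z)²)`. -/
noncomputable def Br : ℕ → ℝ → ℝ
  | 0, _ => 1
  | r + 1, z => 1 + z / (1 - 2 * z) * Br r (z ^ 2 / (1 - 2 * z) ^ 2)


namespace BTree

/-! ### Encoding into lists of booleans -/

def enc : BTree → List Bool
  | leaf => [false]
  | node a b => true :: (a.enc ++ b.enc)

lemma enc_length (t : BTree) : t.enc.length = 2 * t.size + 1 := by
  induction t with
  | leaf => simp [enc, size]
  | node a b iha ihb => simp [enc, size, iha, ihb]; omega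

lemma enc_append_inj : ∀ (t₁ t₂ : BTree) (l₁ l₂ : List Bool),
    t₁.enc ++ l₁ = t₂.enc ++ l₂ → t₁ = t₂ ∧ l₁ = l₂ := by
  intro t₁
  induction t₁ with
  | leaf =>
    intro t₂ l₁ l₂ h
    cases t₂ with
    | leaf => simpa [enc] using h
    | node a b => simp [enc] at h
  | node a b iha ihb =>
    intro t₂ l₁ l₂ h
    cases t₂ with
    | leaf => simp [enc] at h
    | node c d =>
      simp only [enc, List.cons_append, List.cons.injEq, List.append_assoc] at h
      obtain ⟨-, h⟩ := h
      obtain ⟨rfl, h⟩ := iha c _ _ h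
      replace h := List.append_cancel_left h
      obtain ⟨rfl, rfl⟩ := ihb d _ _ h
      exact ⟨rfl, rfl⟩

lemma enc_injective : Function.Injective enc := by
  intro t₁ t₂ h
  exact (enc_append_inj t₁ t₂ [] [] (by simpa using h)).1

/-! ### Finiteness and counting bounds -/

lemma finite_sizeEq (n : ℕ) : {t : BTree | t.size = n}.Finite := by
  have h : {t : BTree | t.size = n} ⊆ enc ⁻¹' {l : List Bool | l.length = 2 * n + 1} := by
    intro t ht
    simp only [Set.mem_preimage, Set.mem_setOf_eq, enc_length]
    simp only [Set.mem_setOf_eq] at ht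
    omega
  exact Set.Finite.subset
    (Set.Finite.preimage enc_injective.injOn (List.finite_length_eq Bool (2 * n + 1))) h

lemma card_filter_le (u : Finset BTree) (n : ℕ) :
    (u.filter (fun t => t.size = n)).card ≤ 2 ^ (2 * n + 1) := by
  classical
  have := Finset.card_le_card_of_injOn
    (f := fun t : BTree => (fun i : Fin (2 * n + 1) => t.enc.getD i false))
    (s := u.filter (fun t => t.size = n)) (t := Finset.univ) (fun a _ => Finset.mem_univ _) ?_
  · simpa [Fintype.card_fun] using this
  · intro t₁ h₁ t₂ h₂ h
    simp only [Finset.coe_filter, Set.mem_setOf_eq] at h₁ h₂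
    apply enc_injective
    apply List.ext_getElem (by rw [enc_length, enc_length, h₁.2, h₂.2])
    intro i hi₁ hi₂
    have hlt : i < 2 * n + 1 := by rwa [enc_length, h₁.2] at hi₁
    have := congrFun h ⟨i, hlt⟩
    simp only [] at this
    change t₁.enc.getD i false = t₂.enc.getD i false at this
    rwa [List.getD_eq_getElem _ _ hi₁, List.getD_eq_getElem _ _ hi₂] at this

/-! ### Summability -/

lemma summable_global {z : ℝ} (h₀ : 0 ≤ z) (h₁ : z < 1 / 4) :
    Summable (fun t : BTree => z ^ t.size) := by
  classical
  apply summable_of_sum_le (c := 2 * (1 - 4 * z)⁻¹) (fun t => pow_nonneg h₀ _)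
  intro u
  set N := u.sup size + 1 with hN
  have hmap : ∀ t ∈ u, t.size ∈ Finset.range N := by
    intro t ht
    exact Finset.mem_range.mpr (Nat.lt_succ_of_le (Finset.le_sup ht))
  rw [← Finset.sum_fiberwise_of_maps_to hmap (fun t => z ^ t.size)]
  have hbound : ∀ n ∈ Finset.range N,
      ∑ t ∈ u.filter (fun t => t.size = n), z ^ t.size ≤ 2 * (4 * z) ^ n := by
    intro n _
    have : ∑ t ∈ u.filter (fun t => t.size = n), z ^ t.size
        = (u.filter (fun t => t.size = n)).card * z ^ n := by
      rw [Finset.sum_congr rfl (fun t ht => by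
        rw [(Finset.mem_filter.mp ht).2]), Finset.sum_const, nsmul_eq_mul]
    rw [this]
    calc ((u.filter (fun t => t.size = n)).card : ℝ) * z ^ n
        ≤ (2 ^ (2 * n + 1) : ℕ) * z ^ n := by
          apply mul_le_mul_of_nonneg_right _ (pow_nonneg h₀ _)
          exact_mod_cast card_filter_le u n
      _ = 2 * (4 * z) ^ n := by
          push_cast
          rw [mul_pow, pow_add, pow_mul]
          ring
  calc ∑ n ∈ Finset.range N, ∑ t ∈ u.filter (fun t => t.size = n), z ^ t.size
      ≤ ∑ n ∈ Finset.range N, 2 * (4 * z) ^ n := Finset.sum_le_sum hbound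
    _ ≤ ∑' n : ℕ, 2 * (4 * z) ^ n := by
        apply Summable.sum_le_tsum _ (fun n _ => by positivity)
        exact (summable_geometric_of_lt_one (by positivity) (by linarith)).mul_left 2
    _ = 2 * (1 - 4 * z)⁻¹ := by
        rw [tsum_mul_left, tsum_geometric_of_lt_one (by positivity) (by linarith)]

end BTree

lemma Br_succ (r : ℕ) (z : ℝ) :
    Br (r + 1) z = 1 + z / (1 - 2 * z) * Br r (z ^ 2 / (1 - 2 * z) ^ 2) := rfl

lemma Br_zero (z : ℝ) : Br 0 z = 1 := rfl

noncomputable def Dr : ℕ → ℝ → ℝ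
  | 0, _ => 1
  | p + 1, z => Br (p + 1) z - Br p z

lemma sigma_mem {z : ℝ} (h₀ : 0 ≤ z) (h₁ : z < 1 / 4) :
    0 ≤ z ^ 2 / (1 - 2 * z) ^ 2 ∧ z ^ 2 / (1 - 2 * z) ^ 2 < 1 / 4 := by
  have h2 : (0:ℝ) < 1 - 2 * z := by linarith
  constructor
  · positivity
  · rw [div_lt_iff₀ (by positivity)]
    nlinarith

lemma Br_nonneg : ∀ (r : ℕ) {z : ℝ}, 0 ≤ z → z < 1 / 4 → 0 ≤ Br r z
  | 0, z, _, _ => by rw [Br_zero]; norm_num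
  | r + 1, z, h₀, h₁ => by
    have h2 : (0:ℝ) < 1 - 2 * z := by linarith
    have hs := sigma_mem h₀ h₁
    have hr := Br_nonneg r hs.1 hs.2
    have hx : 0 ≤ z / (1 - 2 * z) * Br r (z ^ 2 / (1 - 2 * z) ^ 2) := by positivity
    rw [Br_succ]; linarith

lemma Br_bound : ∀ (r : ℕ) {z : ℝ}, 0 ≤ z → z < 1 / 4 → 2 * z * Br r z < 1
  | 0, z, h₀, h₁ => by rw [Br_zero]; linarith
  | r + 1, z, h₀, h₁ => by
    have h2 : (0:ℝ) < 1 - 2 * z := by linarith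
    have hs := sigma_mem h₀ h₁
    rcases eq_or_lt_of_le h₀ with hz | hz
    · rw [← hz]; norm_num
    · have hb := Br_bound r hs.1 hs.2
      have hnn := Br_nonneg r hs.1 hs.2
      set B := Br r (z ^ 2 / (1 - 2 * z) ^ 2) with hB
      have key : 2 * z ^ 2 * B < (1 - 2 * z) ^ 2 := by
        have h3 : (0:ℝ) < (1 - 2 * z) ^ 2 := by positivity
        calc 2 * z ^ 2 * B = (2 * (z ^ 2 / (1 - 2 * z) ^ 2) * B) * (1 - 2 * z) ^ 2 := by
              field_simp
          _ < 1 * (1 - 2 * z) ^ 2 := mul_lt_mul_of_pos_right hb h3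
          _ = (1 - 2 * z) ^ 2 := one_mul _
      rw [Br_succ]
      have e : 2 * z * (1 + z / (1 - 2 * z) * B) = 2 * z + (2 * z ^ 2 * B) / (1 - 2 * z) := by
        field_simp
      rw [e]
      have : (2 * z ^ 2 * B) / (1 - 2 * z) < 1 - 2 * z := by
        rw [div_lt_iff₀ h2]
        nlinarith [key]
      linarith

lemma Dr_rec (p : ℕ) {z : ℝ} (h : (1:ℝ) - 2 * z ≠ 0) :
    Dr (p + 1) z = z / (1 - 2 * z) * Dr p (z ^ 2 / (1 - 2 * z) ^ 2) := by
  cases p with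
  | zero =>
    show Br 1 z - Br 0 z = z / (1 - 2 * z) * Dr 0 (z ^ 2 / (1 - 2 * z) ^ 2)
    rw [Br_succ 0 z, Br_zero, Br_zero]
    show 1 + z / (1 - 2 * z) * 1 - 1 = z / (1 - 2 * z) * 1
    ring
  | succ p =>
    show Br (p + 1 + 1) z - Br (p + 1) z =
      z / (1 - 2 * z) * (Br (p + 1) (z ^ 2 / (1 - 2 * z) ^ 2) - Br p (z ^ 2 / (1 - 2 * z) ^ 2))
    rw [Br_succ (p + 1) z, Br_succ p z]
    ring

lemma J : ∀ (p : ℕ) {z : ℝ}, 0 ≤ z → z < 1 / 4 →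
    Dr (p + 1) z * (1 - 2 * z * Br p z) = z * (Dr p z) ^ 2
  | 0, z, h₀, h₁ => by
    have h2 : (0:ℝ) < 1 - 2 * z := by linarith
    rw [Dr_rec 0 (ne_of_gt h2), Br_zero]
    show z / (1 - 2 * z) * Dr 0 _ * (1 - 2 * z * 1) = z * (Dr 0 z) ^ 2
    show z / (1 - 2 * z) * 1 * (1 - 2 * z * 1) = z * (1:ℝ) ^ 2
    field_simp
    exact mul_div_cancel_right₀ z (ne_of_gt (by linarith))
  | p + 1, z, h₀, h₁ => by
    have h2 : (0:ℝ) < 1 - 2 * z := by linarith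
    have hs := sigma_mem h₀ h₁
    have ih := J p hs.1 hs.2
    have hz : z / (1 - 2 * z) * (1 - 2 * z) = z := div_mul_cancel₀ z (ne_of_gt h2)
    have hE : z ^ 2 / (1 - 2 * z) ^ 2 = (z / (1 - 2 * z)) ^ 2 := by rw [div_pow]
    rw [Dr_rec (p + 1) (ne_of_gt h2), Dr_rec p (ne_of_gt h2), Br_succ]
    rw [hE] at ih ⊢
    linear_combination z * ih + Dr (p + 1) ((z / (1 - 2 * z)) ^ 2) * hz

namespace BTree

def Sle (r : ℕ) : Set BTree := {t | t.reg ≤ r}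
def Seq (p : ℕ) : Set BTree := {t | t.reg = p}

lemma mem_Sle {t : BTree} {r : ℕ} : t ∈ Sle r ↔ t.reg ≤ r := Iff.rfl
lemma mem_Seq {t : BTree} {p : ℕ} : t ∈ Seq p ↔ t.reg = p := Iff.rfl

lemma reg_eq_zero_iff {t : BTree} : t.reg = 0 ↔ t = leaf := by
  cases t with
  | leaf => simp [reg]
  | node a b =>
    by_cases h : a.reg = b.reg <;> simp [reg, h] <;> omega

lemma reg_node_succ_iff {a b : BTree} {p : ℕ} :
    (node a b).reg = p + 1 ↔
      (a.reg = p ∧ b.reg = p) ∨ ((a.reg ≤ p ∧ b.reg = p + 1) ∨ (a.reg = p + 1 ∧ b.reg ≤ p)) := by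
  by_cases h : a.reg = b.reg <;> simp [reg, h] <;> omega

lemma Seq_succ_eq (p : ℕ) :
    Seq (p + 1) = (fun uv : BTree × BTree => node uv.1 uv.2) '' (Seq p ×ˢ Seq p)
      ∪ ((fun uv : BTree × BTree => node uv.1 uv.2) '' (Sle p ×ˢ Seq (p + 1))
        ∪ (fun uv : BTree × BTree => node uv.1 uv.2) '' (Seq (p + 1) ×ˢ Sle p)) := by
  ext t
  cases t with
  | leaf =>
    simp only [mem_Seq, Set.mem_union, Set.mem_image, Set.mem_prod, Prod.exists]
    constructor
    · intro h; exact absurd h (by simp [reg])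
    · rintro (⟨x, y, -, h⟩ | ⟨x, y, -, h⟩ | ⟨x, y, -, h⟩) <;> exact absurd h (by simp)
  | node a b =>
    simp only [mem_Seq, Set.mem_union, Set.mem_image, Set.mem_prod, Prod.exists]
    rw [reg_node_succ_iff]
    constructor
    · rintro (h | h | h)
      · exact Or.inl ⟨a, b, ⟨h.1, h.2⟩, rfl⟩
      · exact Or.inr (Or.inl ⟨a, b, ⟨h.1, h.2⟩, rfl⟩)
      · exact Or.inr (Or.inr ⟨a, b, ⟨h.1, h.2⟩, rfl⟩)
    · rintro (⟨x, y, hxy, he⟩ | ⟨x, y, hxy, he⟩ | ⟨x, y, hxy, he⟩) <;>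
        obtain ⟨rfl, rfl⟩ := node.inj he
      · exact Or.inl hxy
      · exact Or.inr (Or.inl hxy)
      · exact Or.inr (Or.inr hxy)

lemma disj₂ (p : ℕ) :
    Disjoint ((fun uv : BTree × BTree => node uv.1 uv.2) '' (Sle p ×ˢ Seq (p + 1)))
      ((fun uv : BTree × BTree => node uv.1 uv.2) '' (Seq (p + 1) ×ˢ Sle p)) := by
  rw [Set.disjoint_left]
  rintro t ⟨⟨x, y⟩, ⟨hx, hy⟩, rfl⟩ ⟨⟨u, v⟩, ⟨hu, hv⟩, he⟩
  obtain ⟨rfl, rfl⟩ := node.inj he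
  simp only [mem_Sle, mem_Seq] at hx hy hu hv
  omega

lemma disj₁ (p : ℕ) :
    Disjoint ((fun uv : BTree × BTree => node uv.1 uv.2) '' (Seq p ×ˢ Seq p))
      ((fun uv : BTree × BTree => node uv.1 uv.2) '' (Sle p ×ˢ Seq (p + 1))
        ∪ (fun uv : BTree × BTree => node uv.1 uv.2) '' (Seq (p + 1) ×ˢ Sle p)) := by
  rw [Set.disjoint_left]
  rintro t ⟨⟨x, y⟩, ⟨hx, hy⟩, rfl⟩ (⟨⟨u, v⟩, ⟨hu, hv⟩, he⟩ | ⟨⟨u, v⟩, ⟨hu, hv⟩, he⟩) <;>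
    obtain ⟨rfl, rfl⟩ := node.inj he <;>
    simp only [mem_Sle, mem_Seq] at hx hy hu hv
  · omega
  · omega

lemma tsum_node_image {z : ℝ} (h₀ : 0 ≤ z) (h₁ : z < 1 / 4) (P Q : Set BTree) :
    ∑' (x : ↑((fun uv : BTree × BTree => node uv.1 uv.2) '' (P ×ˢ Q))), z ^ (x : BTree).size
      = z * ((∑' (u : P), z ^ (u : BTree).size) * (∑' (v : Q), z ^ (v : BTree).size)) := by
  have hinj : Set.InjOn (fun uv : BTree × BTree => node uv.1 uv.2) (P ×ˢ Q) := by
    intro x _ y _ h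
    obtain ⟨h1, h2⟩ := node.inj h
    exact Prod.ext h1 h2
  refine (tsum_image (fun t : BTree => z ^ t.size) hinj).trans ?_
  refine ((Equiv.tsum_eq (Equiv.Set.prod P Q).symm
    (fun x : ↑(P ×ˢ Q) => z ^ (node (x : BTree × BTree).1 (x : BTree × BTree).2).size)).symm).trans ?_
  have hfun : ∀ y : ↑P × ↑Q,
      z ^ (node (((Equiv.Set.prod P Q).symm y : ↑(P ×ˢ Q)) : BTree × BTree).1
        (((Equiv.Set.prod P Q).symm y : ↑(P ×ˢ Q)) : BTree × BTree).2).size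
      = z * (z ^ ((y.1 : BTree)).size * z ^ ((y.2 : BTree)).size) := by
    rintro ⟨⟨u, hu⟩, ⟨v, hv⟩⟩
    show z ^ (node u v).size = _
    rw [size]
    ring
  rw [tsum_congr hfun]
  have hsP : Summable (fun u : ↑P => z ^ (u : BTree).size) := (summable_global h₀ h₁).subtype P
  have hsQ : Summable (fun v : ↑Q => z ^ (v : BTree).size) := (summable_global h₀ h₁).subtype Q
  rw [tsum_mul_left]
  congr 1
  have hprod0 := hsP.mul_of_nonneg hsQ (fun u => pow_nonneg h₀ _) (fun v => pow_nonneg h₀ _)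
  have hprod : Summable (fun y : ↑P × ↑Q => z ^ ((y.1 : BTree)).size * z ^ ((y.2 : BTree)).size) := by
    simpa using hprod0
  refine (Summable.tsum_prod' hprod (fun u => by
    simpa using hsQ.mul_left (z ^ ((u : BTree)).size))).trans ?_
  calc ∑' (u : ↑P), ∑' (v : ↑Q), z ^ ((u : BTree)).size * z ^ ((v : BTree)).size
      = ∑' (u : ↑P), z ^ ((u : BTree)).size * ∑' (v : ↑Q), z ^ ((v : BTree)).size := by
        exact tsum_congr fun u => tsum_mul_left
    _ = _ := tsum_mul_right

lemma key_tsum {z : ℝ} (h₀ : 0 ≤ z) (h₁ : z < 1 / 4) :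
    ∀ p : ℕ, ((∑' t : ↑(Seq p), z ^ (t : BTree).size) = Dr p z) ∧
      ((∑' t : ↑(Sle p), z ^ (t : BTree).size) = Br p z) := by
  have hg := summable_global h₀ h₁
  intro p
  induction p with
  | zero =>
    have hSeq : Seq 0 = {leaf} := by
      ext t
      simp [Seq, reg_eq_zero_iff]
    have hSle : Sle 0 = {leaf} := by
      ext t
      simp [Sle, Nat.le_zero, reg_eq_zero_iff]
    constructor
    · rw [hSeq, tsum_singleton leaf (fun t : BTree => z ^ t.size)]
      simp [size, Dr]
    · rw [hSle, tsum_singleton leaf (fun t : BTree => z ^ t.size)]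
      simp [size, Br_zero]
  | succ p ih =>
    obtain ⟨ihH, ihA⟩ := ih
    have heq : (∑' t : ↑(Seq (p + 1)), z ^ (t : BTree).size)
        = z * (Dr p z * Dr p z)
          + (z * (Br p z * (∑' t : ↑(Seq (p + 1)), z ^ (t : BTree).size))
            + z * ((∑' t : ↑(Seq (p + 1)), z ^ (t : BTree).size) * Br p z)) := by
      conv_lhs => rw [Seq_succ_eq p]
      have e1 := Summable.tsum_union_disjoint (f := fun t : BTree => z ^ t.size) (disj₁ p)
        (hg.subtype _) (hg.subtype _)
      have e2 := Summable.tsum_union_disjoint (f := fun t : BTree => z ^ t.size) (disj₂ p)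
        (hg.subtype _) (hg.subtype _)
      rw [e1, e2, tsum_node_image h₀ h₁, tsum_node_image h₀ h₁, tsum_node_image h₀ h₁,
        ihH, ihA]
    have hBb := Br_bound p h₀ h₁
    have hne : 1 - 2 * z * Br p z ≠ 0 := ne_of_gt (by linarith)
    have hJ := J p h₀ h₁
    have hH : (∑' t : ↑(Seq (p + 1)), z ^ (t : BTree).size) = Dr (p + 1) z := by
      have hmul : (∑' t : ↑(Seq (p + 1)), z ^ (t : BTree).size) * (1 - 2 * z * Br p z)
          = Dr (p + 1) z * (1 - 2 * z * Br p z) := by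
        rw [hJ]
        linear_combination heq
      exact mul_right_cancel₀ hne hmul
    refine ⟨hH, ?_⟩
    have hunion : Sle (p + 1) = Sle p ∪ Seq (p + 1) := by
      ext t
      simp only [Sle, Seq, Set.mem_union, Set.mem_setOf_eq]
      omega
    have hdisj : Disjoint (Sle p) (Seq (p + 1)) := by
      rw [Set.disjoint_left]
      intro t h1 h2
      rw [mem_Sle] at h1
      rw [mem_Seq] at h2
      omega
    have e3 := Summable.tsum_union_disjoint (f := fun t : BTree => z ^ t.size) hdisj
      (hg.subtype _) (hg.subtype _)
    rw [hunion, e3, ihA, hH]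
    show Br p z + (Br (p + 1) z - Br p z) = Br (p + 1) z
    ring

end BTree


/-- For every `r ≥ 0`, the coefficient `[z^n] B_r(z)` equals the number of binary trees
with `n` internal nodes whose register function is at most `r` (stated via the power
series expansion of `B_r` on `0 ≤ z < 1/4`). -/
theorem coeff_Br_eq_card_trees_reg_le (r : ℕ) (z : ℝ) (h₀ : 0 ≤ z) (h₁ : z < 1 / 4) :
    HasSum
      (fun n : ℕ => (Set.ncard {t : BTree | t.size = n ∧ t.reg ≤ r} : ℝ) * z ^ n)
      (Br r z) := by
  classical
  have hg := BTree.summable_global h₀ h₁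
  have hsub : Summable (fun t : ↑(BTree.Sle r) => z ^ (t : BTree).size) :=
    hg.subtype (BTree.Sle r)
  have hts := (BTree.key_tsum h₀ h₁ r).2
  have hs : HasSum (fun t : ↑(BTree.Sle r) => z ^ (t : BTree).size) (Br r z) := by
    have := hsub.hasSum
    rwa [hts] at this
  have hfin : ∀ n : ℕ, ({t : BTree | t.size = n ∧ t.reg ≤ r}).Finite := fun n =>
    (BTree.finite_sizeEq n).subset (fun t ht => ht.1)
  refine HasSum.sigma
    ((Equiv.sigmaFiberEquiv (fun t : ↑(BTree.Sle r) => (t : BTree).size)).hasSum_iff.mpr hs) ?_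
  intro n
  -- goal: HasSum (fun c : {x : ↑(Sle r) // size ↑x = n} => z ^ size ↑↑c) (ncard ... * z ^ n)
  haveI : Fintype ↑{t : BTree | t.size = n ∧ t.reg ≤ r} := (hfin n).fintype
  have e : {x : ↑(BTree.Sle r) // (x : BTree).size = n} ≃ ↑{t : BTree | t.size = n ∧ t.reg ≤ r} :=
    { toFun := fun c => ⟨c.1.1, c.2, c.1.2⟩
      invFun := fun y => ⟨⟨y.1, y.2.2⟩, y.2.1⟩
      left_inv := fun c => rfl
      right_inv := fun y => rfl }
  have hconst : HasSum (fun _ : ↑{t : BTree | t.size = n ∧ t.reg ≤ r} => z ^ n)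
      ((Set.ncard {t : BTree | t.size = n ∧ t.reg ≤ r} : ℝ) * z ^ n) := by
    have h1 := hasSum_fintype (fun _ : ↑{t : BTree | t.size = n ∧ t.reg ≤ r} => z ^ n)
    rwa [Finset.sum_const, nsmul_eq_mul, Finset.card_univ, ← Nat.card_eq_fintype_card,
      Nat.card_coe_set_eq] at h1
  have := (e.hasSum_iff.mpr hconst)
  have hfn : (fun c : {x : ↑(BTree.Sle r) // (x : BTree).size = n} =>
      z ^ ((c.1 : BTree)).size) = fun c => z ^ n := funext fun c => by rw [c.2]
  rw [show ((fun _ : ↑{t : BTree | t.size = n ∧ t.reg ≤ r} => z ^ n) ∘ e)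
      = fun c : {x : ↑(BTree.Sle r) // (x : BTree).size = n} => z ^ n from rfl] at this
  rw [← hfn] at this
  exact this
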